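/- Let m : [0,1] → ℝ^d and Σ : [0,1] → ℝ^{d×d} be differentiable with Σ(t) symmetric positive definite for every t, let F : [0,1] → ℝ^{d×d} and g : [0,1] → ℝ^d be continuous, let a ∈ ℝ^{d×d} be symmetric positive semi-definite and ε > 0, and let ρ(t,x) = (2π)^{−d/2} (det Σ(t))^{−1/2} exp(−½ (x − m(t))ᵀ Σ(t)⁻¹ (x − m(t))) be the Gaussian density with mean m(t) and covariance Σ(t). Then ρ satisfies the Fokker–Planck equation ∂_t ρ(t,x) + ∇_x · (ρ(t,x)(F(t)x + g(t))) − (ε/2) Σ_{i,k=1}^{d} a_{ik} ∂²ρ/∂x_i∂x_k (t,x) = 0 at every (t,x) ∈ [0,1] × ℝ^d if and only if ṁ(t) = F(t) m(t) + g(t) and Σ̇(t) = F(t) Σ(t) + Σ(t) F(t)ᵀ + ε a for every t ∈ [0,1]. -/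

import Mathlib

open Matrix

noncomputable section

namespace Stmt8

/-- Partial derivative in the `i`-th coordinate of a function on `ℝ^d`. -/
def pd {d : ℕ} (i : Fin d) (f : (Fin d → ℝ) → ℝ) (x : Fin d → ℝ) : ℝ :=
  deriv (fun s => f (Function.update x i s)) (x i)

/-- The Gaussian density with mean `m` and covariance `S`:
`ρ(x) = (2π)^{-d/2} (det S)^{-1/2} exp(-½ (x-m)ᵀ S⁻¹ (x-m))`. -/
def gaussDens {d : ℕ} (m : Fin d → ℝ) (S : Matrix (Fin d) (Fin d) ℝ) (x : Fin d → ℝ) : ℝ :=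
  (2 * Real.pi) ^ (-(d : ℝ) / 2) * S.det ^ (-(1 : ℝ) / 2) *
    Real.exp (-(1 / 2) * ((x - m) ⬝ᵥ (S⁻¹ *ᵥ (x - m))))

/-! ### Auxiliary lemmas -/

/-- det as a continuous multilinear map in the rows. -/
def detCMM (d : ℕ) : ContinuousMultilinearMap ℝ (fun _ : Fin d => Fin d → ℝ) ℝ :=
  { Matrix.detRowAlternating.toMultilinearMap with
    cont := by
      have : Continuous fun M : Fin d → Fin d → ℝ => (Matrix.of M).det :=
        Continuous.matrix_det (by exact continuous_id)
      exact this }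

/-- Derivative of determinant along a path of matrices. -/
lemma det_hasDerivAt {d : ℕ} {N : ℝ → Matrix (Fin d) (Fin d) ℝ}
    {N' : Matrix (Fin d) (Fin d) ℝ} {t : ℝ}
    (h : ∀ i j, HasDerivAt (fun s => N s i j) (N' i j) t) :
    HasDerivAt (fun s => (N s).det) (∑ i, ((N t).updateRow i (N' i)).det) t := by
  have hcurve : HasDerivAt (fun s => (fun i => N s i)) (fun i => N' i) t :=
    hasDerivAt_pi.2 fun i => hasDerivAt_pi.2 fun j => h i j
  have H := ((detCMM d).hasFDerivAt (fun i => N t i)).comp_hasDerivAt t hcurve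
  have : ((detCMM d).linearDeriv fun i => N t i) (fun i => N' i)
      = ∑ i, ((N t).updateRow i (N' i)).det := by
    rw [ContinuousMultilinearMap.linearDeriv_apply]
    refine Finset.sum_congr rfl fun i _ => ?_
    rfl
  rw [this] at H
  exact H

/-- Jacobi-type identity. -/
lemma sum_det_updateRow {d : ℕ} (S S' : Matrix (Fin d) (Fin d) ℝ) (hS : IsUnit S.det) :
    ∑ i, (S.updateRow i (S' i)).det = S.det * (S⁻¹ * S').trace := by
  have hrow : ∀ i, S' i = ∑ k, (S' * S⁻¹) i k • S k := by
    intro i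
    have : S' * S⁻¹ * S = S' := by rw [Matrix.mul_assoc, Matrix.nonsing_inv_mul S hS, Matrix.mul_one]
    conv_lhs => rw [← this]
    ext j
    simp [Matrix.mul_apply, Finset.sum_apply]
  calc ∑ i, (S.updateRow i (S' i)).det
      = ∑ i, (S' * S⁻¹) i i • S.det := by
        refine Finset.sum_congr rfl fun i _ => ?_
        rw [hrow i, Matrix.det_updateRow_sum]
    _ = S.det * (S⁻¹ * S').trace := by
        rw [← Matrix.trace_mul_comm]
        simp [Matrix.trace, Matrix.diag, smul_eq_mul, Finset.sum_mul, mul_comm]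
        rw [Finset.mul_sum]; exact Finset.sum_congr rfl fun i _ => mul_comm _ _

lemma deriv_eq_of_eqOn {f g : ℝ → ℝ} {f' g' t : ℝ} (ht : t ∈ Set.Icc (0:ℝ) 1)
    (hf : HasDerivAt f f' t) (hg : HasDerivAt g g' t)
    (h : ∀ s ∈ Set.Icc (0:ℝ) 1, f s = g s) : f' = g' := by
  have hu : UniqueDiffWithinAt ℝ (Set.Icc (0:ℝ) 1) t := uniqueDiffOn_Icc one_pos t ht
  have hfw : HasDerivWithinAt f f' (Set.Icc (0:ℝ) 1) t := hf.hasDerivWithinAt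
  have hgw : HasDerivWithinAt f g' (Set.Icc (0:ℝ) 1) t :=
    (hg.hasDerivWithinAt).congr (fun s hs => (h s hs)) (h t ht)
  rw [← hfw.derivWithin hu, ← hgw.derivWithin hu]

lemma inv_entry_differentiable {d : ℕ} {Sf : ℝ → Matrix (Fin d) (Fin d) ℝ}
    {S' : Matrix (Fin d) (Fin d) ℝ} {t : ℝ}
    (h : ∀ i j, HasDerivAt (fun s => Sf s i j) (S' i j) t)
    (hdet : (Sf t).det ≠ 0) (i j : Fin d) :
    DifferentiableAt ℝ (fun s => (Sf s)⁻¹ i j) t := by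
  have hD : HasDerivAt (fun s => (Sf s).det) _ t := det_hasDerivAt h
  have hadj : DifferentiableAt ℝ (fun s => (Sf s).adjugate i j) t := by
    have : ∀ s, (Sf s).adjugate i j = ((Sf s).updateRow j (Pi.single i 1)).det := by
      intro s; rw [Matrix.adjugate_apply]
    simp_rw [this]
    have hN : ∀ k l, HasDerivAt (fun s => ((Sf s).updateRow j (Pi.single i 1)) k l)
        ((Matrix.updateRow S' j 0) k l) t := by
      intro k l
      rcases eq_or_ne k j with rfl | hk
      · simpa [Matrix.updateRow_self] using hasDerivAt_const t (Pi.single (M := fun _ => ℝ) i 1 l)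
      · simpa [Matrix.updateRow_ne hk] using h k l
    exact (det_hasDerivAt hN).differentiableAt
  have : ∀ s, (Sf s)⁻¹ i j = ((Sf s).det)⁻¹ * (Sf s).adjugate i j := by
    intro s; rw [Matrix.inv_def]; simp [Ring.inverse_eq_inv']
  simp_rw [this]
  exact (hD.differentiableAt.inv hdet).mul hadj

/-- Derivative of the inverse path: `(S⁻¹)' = -S⁻¹ S' S⁻¹`. -/
lemma inv_hasDerivAt {d : ℕ} {Sf Sf' : ℝ → Matrix (Fin d) (Fin d) ℝ} {t : ℝ}
    (ht : t ∈ Set.Icc (0:ℝ) 1)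
    (hSm : ∀ s ∈ Set.Icc (0:ℝ) 1, ∀ i j, HasDerivAt (fun r => Sf r i j) (Sf' s i j) s)
    (hpos : ∀ s ∈ Set.Icc (0:ℝ) 1, (Sf s).PosDef) (i j : Fin d) :
    HasDerivAt (fun s => (Sf s)⁻¹ i j)
      ((-((Sf t)⁻¹ * Sf' t * (Sf t)⁻¹)) i j) t := by
  have hdet : IsUnit (Sf t).det := (hpos t ht).det_pos.ne'.isUnit
  set S := Sf t
  set S' := Sf' t
  set P := (Sf t)⁻¹ with hPdef
  have hdiff : ∀ i j, DifferentiableAt ℝ (fun s => (Sf s)⁻¹ i j) t :=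
    inv_entry_differentiable (hSm t ht) (hpos t ht).det_pos.ne'
  set p' : Matrix (Fin d) (Fin d) ℝ := fun i j => deriv (fun s => (Sf s)⁻¹ i j) t with hp'def
  have hp' : ∀ i j, HasDerivAt (fun s => (Sf s)⁻¹ i j) (p' i j) t :=
    fun i j => (hdiff i j).hasDerivAt
  have key : p' * S + P * S' = 0 := by
    ext i j
    have hf : HasDerivAt (fun s => ∑ k, (Sf s)⁻¹ i k * Sf s k j)
        (∑ k, (p' i k * S k j + P i k * S' k j)) t :=
      HasDerivAt.fun_sum fun k _ => (hp' i k).mul (hSm t ht k j)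
    have hg : HasDerivAt (fun _ : ℝ => (1 : Matrix (Fin d) (Fin d) ℝ) i j) 0 t :=
      hasDerivAt_const _ _
    have heq : ∀ s ∈ Set.Icc (0:ℝ) 1,
        (∑ k, (Sf s)⁻¹ i k * Sf s k j) = (1 : Matrix (Fin d) (Fin d) ℝ) i j := by
      intro s hs
      have : (Sf s)⁻¹ * Sf s = 1 := Matrix.nonsing_inv_mul _ (hpos s hs).det_pos.ne'.isUnit
      calc (∑ k, (Sf s)⁻¹ i k * Sf s k j) = ((Sf s)⁻¹ * Sf s) i j := by rw [Matrix.mul_apply]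
        _ = (1 : Matrix (Fin d) (Fin d) ℝ) i j := by rw [this]
    have h0 : (∑ k, (p' i k * S k j + P i k * S' k j)) = 0 := deriv_eq_of_eqOn ht hf hg heq
    have : (p' * S) i j + (P * S') i j = 0 := by
      rw [Matrix.mul_apply, Matrix.mul_apply, ← Finset.sum_add_distrib]; exact h0
    simpa using this
  have hps : p' * S = -(P * S') := by
    rw [add_eq_zero_iff_eq_neg] at key
    exact key
  have : p' = -(P * S' * P) := by
    have h1 : p' * S * P = -(P * S') * P := by rw [hps]
    have h2 : p' * S * P = p' := by
      rw [Matrix.mul_assoc, Matrix.mul_nonsing_inv _ hdet, Matrix.mul_one]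
    rw [h2] at h1
    rw [h1, Matrix.neg_mul]
  rw [← this]; exact hp' i j

/-! ### Spatial derivatives -/

lemma upd_sub_hasDerivAt {d : ℕ} (x : Fin d → ℝ) (k i : Fin d) (mm : ℝ) :
    HasDerivAt (fun s => Function.update x k s i - mm) (if i = k then 1 else 0) (x k) := by
  rcases eq_or_ne i k with rfl | h
  · simp only [Function.update_apply, if_pos rfl]
    simpa using (hasDerivAt_id (x i)).sub_const mm
  · simp only [Function.update_apply, if_neg h]
    exact hasDerivAt_const _ _

variable {d : ℕ} {m : Fin d → ℝ} {S : Matrix (Fin d) (Fin d) ℝ}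

lemma quadform_hasDerivAt (hP : S⁻¹ᵀ = S⁻¹) (x : Fin d → ℝ) (k : Fin d) :
    HasDerivAt (fun s => ((Function.update x k s - m) ⬝ᵥ (S⁻¹ *ᵥ (Function.update x k s - m))))
      (2 * (S⁻¹ *ᵥ (x - m)) k) (x k) := by
  set P := S⁻¹
  have hform : ∀ s, ((Function.update x k s - m) ⬝ᵥ (P *ᵥ (Function.update x k s - m)))
      = ∑ i, (Function.update x k s i - m i) * (∑ j, P i j * (Function.update x k s j - m j)) := by
    intro s; simp [dotProduct, Matrix.mulVec, Pi.sub_apply]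
  simp only [hform]
  have hinner : ∀ i, HasDerivAt (fun s => ∑ j, P i j * (Function.update x k s j - m j))
      (P i k) (x k) := by
    intro i
    have := HasDerivAt.fun_sum (fun j (_ : j ∈ Finset.univ) =>
      (upd_sub_hasDerivAt x k j (m j)).const_mul (P i j))
    convert this using 1
    · rfl
    · rfl
    simp [Finset.mul_sum, mul_ite]
  have hmain := HasDerivAt.fun_sum (fun i (_ : i ∈ Finset.univ) =>
    ((upd_sub_hasDerivAt x k i (m i)).mul (hinner i)))
  have hval : (∑ i, ((if i = k then (1:ℝ) else 0) * (∑ j, P i j * (Function.update x k (x k) j - m j))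
      + (Function.update x k (x k) i - m i) * P i k)) = 2 * (P *ᵥ (x - m)) k := by
    rw [Function.update_eq_self]
    have h1 : (∑ i, (if i = k then (1:ℝ) else 0) * (∑ j, P i j * (x j - m j)))
        = (P *ᵥ (x - m)) k := by
      simp [ite_mul, Finset.sum_ite_eq', Matrix.mulVec, dotProduct, Pi.sub_apply]
    have h2 : (∑ i, (x i - m i) * P i k) = (P *ᵥ (x - m)) k := by
      have : (∑ i, (x i - m i) * P i k) = (Pᵀ *ᵥ (x - m)) k := by
        simp [Matrix.mulVec, dotProduct, Matrix.transpose_apply, Pi.sub_apply, mul_comm]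
      rw [this, hP]
    rw [Finset.sum_add_distrib, h1, h2]; ring
  rw [← hval]
  exact hmain

lemma gauss_hasDerivAt_upd (hP : S⁻¹ᵀ = S⁻¹) (x : Fin d → ℝ) (k : Fin d) :
    HasDerivAt (fun s => gaussDens m S (Function.update x k s))
      (gaussDens m S x * (-(S⁻¹ *ᵥ (x - m)) k)) (x k) := by
  unfold gaussDens
  have h1 := ((quadform_hasDerivAt (m := m) hP x k).const_mul (-(1/2) : ℝ)).exp
  have h2 := h1.const_mul ((2 * Real.pi) ^ (-(d : ℝ) / 2) * S.det ^ (-(1 : ℝ) / 2))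
  convert h2 using 1
  · rfl
  · rfl
  rw [Function.update_eq_self]
  ring

/-- pd of the Gaussian density. -/
lemma pd_gauss (hP : S⁻¹ᵀ = S⁻¹) (k : Fin d) :
    pd k (gaussDens m S) = fun x => gaussDens m S x * (-(S⁻¹ *ᵥ (x - m)) k) := by
  funext x
  exact (gauss_hasDerivAt_upd hP x k).deriv

lemma gauss_mul_hasDerivAt (hP : S⁻¹ᵀ = S⁻¹) (x : Fin d → ℝ) (i : Fin d)
    {c : (Fin d → ℝ) → ℝ} {c' : ℝ}
    (hc : HasDerivAt (fun s => c (Function.update x i s)) c' (x i)) :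
    HasDerivAt (fun s => gaussDens m S (Function.update x i s) * c (Function.update x i s))
      (gaussDens m S x * (-(S⁻¹ *ᵥ (x - m)) i) * c x + gaussDens m S x * c') (x i) := by
  have := (gauss_hasDerivAt_upd (m := m) hP x i).mul hc
  rwa [Function.update_eq_self] at this

lemma pd_gauss_mul (hP : S⁻¹ᵀ = S⁻¹) (x : Fin d → ℝ) (i : Fin d)
    {c : (Fin d → ℝ) → ℝ} {c' : ℝ}
    (hc : HasDerivAt (fun s => c (Function.update x i s)) c' (x i)) :
    pd i (fun y => gaussDens m S y * c y) x
      = gaussDens m S x * (-(S⁻¹ *ᵥ (x - m)) i) * c x + gaussDens m S x * c' :=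
  (gauss_mul_hasDerivAt hP x i hc).deriv

lemma linform_hasDerivAt (x : Fin d → ℝ) (i k : Fin d) :
    HasDerivAt (fun s => -(S⁻¹ *ᵥ (Function.update x i s - m)) k) (-(S⁻¹ k i)) (x i) := by
  have hsum : HasDerivAt (fun s => ∑ j, S⁻¹ k j * (Function.update x i s j - m j))
      (S⁻¹ k i) (x i) := by
    have := HasDerivAt.fun_sum (fun j (_ : j ∈ Finset.univ) =>
      (upd_sub_hasDerivAt x i j (m j)).const_mul (S⁻¹ k j))
    convert this using 1
    · rfl
    · rfl
    simp [mul_ite, Finset.sum_ite_eq']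
  have : HasDerivAt (fun s => -(∑ j, S⁻¹ k j * (Function.update x i s j - m j)))
      (-(S⁻¹ k i)) (x i) := hsum.neg
  convert this using 2 with s
  rfl

/-- Second spatial derivative of the Gaussian. -/
lemma pd2_gauss (hP : S⁻¹ᵀ = S⁻¹) (x : Fin d → ℝ) (i k : Fin d) :
    pd i (fun y => pd k (fun z => gaussDens m S z) y) x
      = gaussDens m S x *
          ((S⁻¹ *ᵥ (x - m)) i * (S⁻¹ *ᵥ (x - m)) k - S⁻¹ k i) := by
  have h1 : (fun y => pd k (fun z => gaussDens m S z) y)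
      = fun y => gaussDens m S y * (-(S⁻¹ *ᵥ (y - m)) k) := by
    have := pd_gauss (m := m) hP k
    simp only [show (fun z => gaussDens m S z) = gaussDens m S from rfl, this]
  rw [h1, pd_gauss_mul hP x i (linform_hasDerivAt x i k)]
  ring

/-- Divergence term entry. -/
lemma pd_div_term (hP : S⁻¹ᵀ = S⁻¹) (F : Matrix (Fin d) (Fin d) ℝ) (g : Fin d → ℝ)
    (x : Fin d → ℝ) (i : Fin d) :
    pd i (fun y => gaussDens m S y * (F *ᵥ y + g) i) x
      = gaussDens m S x * (-(S⁻¹ *ᵥ (x - m)) i) * (F *ᵥ x + g) i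
        + gaussDens m S x * F i i := by
  refine pd_gauss_mul hP x i ?_
  have hsum : HasDerivAt (fun s => ∑ j, F i j * Function.update x i s j + g i) (F i i) (x i) := by
    have h0 := HasDerivAt.fun_sum (fun j (_ : j ∈ Finset.univ) =>
      ((upd_sub_hasDerivAt x i j 0).const_mul (F i j)))
    simp only [sub_zero] at h0
    have := h0.add_const (g i)
    convert this using 1
    · rfl
    · rfl
    simp [mul_ite, Finset.sum_ite_eq']
  convert hsum using 2 with s
  rfl

/-! ### Matrix algebra helpers -/

lemma symm_inv (h : S.PosDef) : (S⁻¹)ᵀ = S⁻¹ := by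
  rw [Matrix.transpose_nonsing_inv]
  congr 1
  have := h.isHermitian.eq
  rwa [Matrix.conjTranspose_eq_transpose_of_trivial] at this

lemma dot_symm {P : Matrix (Fin d) (Fin d) ℝ} (hP : Pᵀ = P) (v w : Fin d → ℝ) :
    (P *ᵥ v) ⬝ᵥ w = v ⬝ᵥ (P *ᵥ w) := by
  rw [Matrix.dotProduct_mulVec]
  congr 1
  rw [← Matrix.mulVec_transpose, hP]

lemma dot_mulVec_transpose (Q : Matrix (Fin d) (Fin d) ℝ) (u : Fin d → ℝ) :
    u ⬝ᵥ (Q *ᵥ u) = u ⬝ᵥ (Qᵀ *ᵥ u) := by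
  rw [Matrix.mulVec_transpose, Matrix.dotProduct_mulVec, dotProduct_comm]

/-- The key scalar identity for assembling the FP left-hand side. -/
lemma inner_identity (P S' F a : Matrix (Fin d) (Fin d) ℝ) (hP : Pᵀ = P) (ε : ℝ)
    (u mu m' g : Fin d → ℝ) :
    (-(1/2) * (P * S').trace
      + -(1/2) * ((-(m')) ⬝ᵥ (P *ᵥ u) + u ⬝ᵥ ((-(P * S' * P)) *ᵥ u) + u ⬝ᵥ (P *ᵥ (-(m')))))
    + ((-(P *ᵥ u)) ⬝ᵥ (F *ᵥ (u + mu) + g) + F.trace)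
    - (ε/2) * ((P *ᵥ u) ⬝ᵥ (a *ᵥ (P *ᵥ u)) - (a * P).trace)
    = (F.trace + (ε/2) * (a * P).trace - (1/2) * (P * S').trace)
      + (P *ᵥ (m' - (F *ᵥ mu + g))) ⬝ᵥ u
      + u ⬝ᵥ (((1/2 : ℝ) • (P * S' * P) - P * F - (ε/2 : ℝ) • (P * a * P)) *ᵥ u) := by
  have e1 : (-(m')) ⬝ᵥ (P *ᵥ u) = -(m' ⬝ᵥ (P *ᵥ u)) := by rw [neg_dotProduct]
  have e2 : u ⬝ᵥ (P *ᵥ (-(m'))) = -(m' ⬝ᵥ (P *ᵥ u)) := by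
    rw [Matrix.mulVec_neg, dotProduct_neg, ← dot_symm hP, dotProduct_comm]
  have e3 : u ⬝ᵥ ((-(P * S' * P)) *ᵥ u) = -(u ⬝ᵥ ((P * S' * P) *ᵥ u)) := by
    rw [Matrix.neg_mulVec, dotProduct_neg]
  have e4 : (-(P *ᵥ u)) ⬝ᵥ (F *ᵥ (u + mu) + g)
      = -(u ⬝ᵥ ((P * F) *ᵥ u)) - (P *ᵥ (F *ᵥ mu + g)) ⬝ᵥ u := by
    rw [neg_dotProduct, dot_symm hP u, dotProduct_comm (P *ᵥ (F *ᵥ mu + g)) u]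
    simp only [Matrix.mulVec_add, dotProduct_add, Matrix.mulVec_mulVec]
    ring
  have e5 : (P *ᵥ u) ⬝ᵥ (a *ᵥ (P *ᵥ u)) = u ⬝ᵥ ((P * a * P) *ᵥ u) := by
    rw [dot_symm hP, Matrix.mulVec_mulVec, Matrix.mulVec_mulVec]
  have e6 : (P *ᵥ (m' - (F *ᵥ mu + g))) ⬝ᵥ u
      = m' ⬝ᵥ (P *ᵥ u) - (P *ᵥ (F *ᵥ mu + g)) ⬝ᵥ u := by
    rw [Matrix.mulVec_sub, sub_dotProduct, dot_symm hP m' u, dotProduct_comm]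
  have e7 : u ⬝ᵥ (((1/2 : ℝ) • (P * S' * P) - P * F - (ε/2 : ℝ) • (P * a * P)) *ᵥ u)
      = (1/2) * (u ⬝ᵥ ((P * S' * P) *ᵥ u)) - u ⬝ᵥ ((P * F) *ᵥ u)
        - (ε/2) * (u ⬝ᵥ ((P * a * P) *ᵥ u)) := by
    rw [Matrix.sub_mulVec, Matrix.sub_mulVec, dotProduct_sub, dotProduct_sub,
      Matrix.smul_mulVec, Matrix.smul_mulVec, dotProduct_smul,
      dotProduct_smul]
    simp [smul_eq_mul]
  rw [e1, e2, e3, e4, e5, e6, e7]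
  ring

variable {d : ℕ} {mf m' : ℝ → (Fin d → ℝ)} {Sf Sf' : ℝ → Matrix (Fin d) (Fin d) ℝ} {t : ℝ}

/-- Time derivative of the quadratic form. -/
lemma quadform_time_hasDerivAt
    (ht : t ∈ Set.Icc (0:ℝ) 1)
    (hm : ∀ s ∈ Set.Icc (0:ℝ) 1, ∀ i, HasDerivAt (fun r => mf r i) (m' s i) s)
    (hSm : ∀ s ∈ Set.Icc (0:ℝ) 1, ∀ i j, HasDerivAt (fun r => Sf r i j) (Sf' s i j) s)
    (hpos : ∀ s ∈ Set.Icc (0:ℝ) 1, (Sf s).PosDef) (x : Fin d → ℝ) :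
    HasDerivAt (fun s => (x - mf s) ⬝ᵥ ((Sf s)⁻¹ *ᵥ (x - mf s)))
      ((-(m' t)) ⬝ᵥ ((Sf t)⁻¹ *ᵥ (x - mf t))
        + (x - mf t) ⬝ᵥ ((-((Sf t)⁻¹ * Sf' t * (Sf t)⁻¹)) *ᵥ (x - mf t))
        + (x - mf t) ⬝ᵥ ((Sf t)⁻¹ *ᵥ (-(m' t)))) t := by
  set P := (Sf t)⁻¹
  set p' := -((Sf t)⁻¹ * Sf' t * (Sf t)⁻¹) with hp'
  have hu : ∀ i, HasDerivAt (fun s => x i - mf s i) (-(m' t i)) t :=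
    fun i => (hm t ht i).const_sub (x i)
  have hinner : ∀ i, HasDerivAt (fun s => ∑ j, (Sf s)⁻¹ i j * (x j - mf s j))
      (∑ j, (p' i j * (x j - mf t j) + P i j * (-(m' t j)))) t :=
    fun i => HasDerivAt.fun_sum fun j _ => (inv_hasDerivAt ht hSm hpos i j).mul (hu j)
  have hmain := HasDerivAt.fun_sum (fun i (_ : i ∈ Finset.univ) => (hu i).mul (hinner i))
  have hfun : (fun s => (x - mf s) ⬝ᵥ ((Sf s)⁻¹ *ᵥ (x - mf s)))
      = fun s => ∑ i, (x i - mf s i) * (∑ j, (Sf s)⁻¹ i j * (x j - mf s j)) := by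
    funext s; simp [dotProduct, Matrix.mulVec, Pi.sub_apply]
  rw [hfun]
  convert hmain using 1
  · rfl
  · rfl
  · rfl
  have expand : ∀ (v w : Fin d → ℝ) (M : Matrix (Fin d) (Fin d) ℝ),
      v ⬝ᵥ (M *ᵥ w) = ∑ i, v i * ∑ j, M i j * w j := by
    intro v w M; simp [dotProduct, Matrix.mulVec]
  rw [expand, expand, expand]
  simp only [Pi.sub_apply, Pi.neg_apply]
  rw [← Finset.sum_add_distrib, ← Finset.sum_add_distrib]
  refine Finset.sum_congr rfl fun i _ => ?_
  rw [Finset.sum_add_distrib, mul_add]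
  ring

/-- Time derivative of the Gaussian density. -/
lemma gauss_time_hasDerivAt
    (ht : t ∈ Set.Icc (0:ℝ) 1)
    (hm : ∀ s ∈ Set.Icc (0:ℝ) 1, ∀ i, HasDerivAt (fun r => mf r i) (m' s i) s)
    (hSm : ∀ s ∈ Set.Icc (0:ℝ) 1, ∀ i j, HasDerivAt (fun r => Sf r i j) (Sf' s i j) s)
    (hpos : ∀ s ∈ Set.Icc (0:ℝ) 1, (Sf s).PosDef) (x : Fin d → ℝ) :
    HasDerivAt (fun s => gaussDens (mf s) (Sf s) x)
      (gaussDens (mf t) (Sf t) x *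
        (-(1/2) * ((Sf t)⁻¹ * Sf' t).trace
          + -(1/2) * ((-(m' t)) ⬝ᵥ ((Sf t)⁻¹ *ᵥ (x - mf t))
              + (x - mf t) ⬝ᵥ ((-((Sf t)⁻¹ * Sf' t * (Sf t)⁻¹)) *ᵥ (x - mf t))
              + (x - mf t) ⬝ᵥ ((Sf t)⁻¹ *ᵥ (-(m' t)))))) t := by
  have hDpos : 0 < (Sf t).det := (hpos t ht).det_pos
  have hdet : HasDerivAt (fun s => (Sf s).det) ((Sf t).det * ((Sf t)⁻¹ * Sf' t).trace) t := by
    have h0 := det_hasDerivAt (hSm t ht)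
    rwa [sum_det_updateRow _ _ hDpos.ne'.isUnit] at h0
  have hrpow : HasDerivAt (fun s => (Sf s).det ^ (-(1:ℝ)/2))
      ((Sf t).det * ((Sf t)⁻¹ * Sf' t).trace * (-(1:ℝ)/2) * (Sf t).det ^ ((-(1:ℝ)/2) - 1)) t :=
    hdet.rpow_const (Or.inl hDpos.ne')
  have hA := quadform_time_hasDerivAt ht hm hSm hpos x
  have hexp := (hA.const_mul (-(1/2) : ℝ)).exp
  have hprod := ((hrpow.const_mul ((2 * Real.pi) ^ (-(d:ℝ)/2))).mul hexp)
  have hfun : (fun s => gaussDens (mf s) (Sf s) x)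
      = fun s => (2 * Real.pi) ^ (-(d:ℝ)/2) * (Sf s).det ^ (-(1:ℝ)/2) *
          Real.exp (-(1/2) * ((x - mf s) ⬝ᵥ ((Sf s)⁻¹ *ᵥ (x - mf s)))) := by
    funext s; rfl
  rw [hfun]
  convert hprod using 1
  · rfl
  · rfl
  · rfl
  unfold gaussDens
  have hpow : (Sf t).det * (Sf t).det ^ ((-(1:ℝ)/2) - 1) = (Sf t).det ^ (-(1:ℝ)/2) := by
    nth_rewrite 1 [← Real.rpow_one (Sf t).det]
    rw [← Real.rpow_add hDpos]
    norm_num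
  set D := (Sf t).det
  set TR := ((Sf t)⁻¹ * Sf' t).trace
  set A' := ((-(m' t)) ⬝ᵥ ((Sf t)⁻¹ *ᵥ (x - mf t))
      + (x - mf t) ⬝ᵥ ((-((Sf t)⁻¹ * Sf' t * (Sf t)⁻¹)) *ᵥ (x - mf t))
      + (x - mf t) ⬝ᵥ ((Sf t)⁻¹ *ᵥ (-(m' t))))
  set E := Real.exp (-(1/2) * ((x - mf t) ⬝ᵥ ((Sf t)⁻¹ *ᵥ (x - mf t))))
  set c0 := (2 * Real.pi) ^ (-(d:ℝ)/2)
  calc c0 * D ^ (-(1:ℝ)/2) * E * (-(1/2) * TR + -(1/2) * A')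
      = c0 * (D * TR * (-(1:ℝ)/2) * D ^ ((-(1:ℝ)/2) - 1)) * E + c0 * D ^ (-(1:ℝ)/2) * (E * (-(1/2) * A')) := by
        rw [show D * TR * (-(1:ℝ)/2) * D ^ ((-(1:ℝ)/2) - 1)
            = (D * D ^ ((-(1:ℝ)/2) - 1)) * TR * (-(1:ℝ)/2) by ring, hpow]
        ring
    _ = _ := by ring

/-- Master lemma: the FP left-hand side factors as density times quadratic polynomial. -/
lemma master (ε : ℝ) (a F : Matrix (Fin d) (Fin d) ℝ) (g : Fin d → ℝ)
    (ht : t ∈ Set.Icc (0:ℝ) 1)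
    (hm : ∀ s ∈ Set.Icc (0:ℝ) 1, ∀ i, HasDerivAt (fun r => mf r i) (m' s i) s)
    (hSm : ∀ s ∈ Set.Icc (0:ℝ) 1, ∀ i j, HasDerivAt (fun r => Sf r i j) (Sf' s i j) s)
    (hpos : ∀ s ∈ Set.Icc (0:ℝ) 1, (Sf s).PosDef) (x : Fin d → ℝ) :
    deriv (fun s => gaussDens (mf s) (Sf s) x) t
        + (∑ i, pd i (fun y => gaussDens (mf t) (Sf t) y * (F *ᵥ y + g) i) x)
        - (ε / 2) * ∑ i, ∑ k, a i k *
            pd i (fun y => pd k (fun z => gaussDens (mf t) (Sf t) z) y) x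
      = gaussDens (mf t) (Sf t) x *
          ((F.trace + (ε/2) * (a * (Sf t)⁻¹).trace - (1/2) * ((Sf t)⁻¹ * Sf' t).trace)
            + ((Sf t)⁻¹ *ᵥ (m' t - (F *ᵥ mf t + g))) ⬝ᵥ (x - mf t)
            + (x - mf t) ⬝ᵥ
                (((1/2 : ℝ) • ((Sf t)⁻¹ * Sf' t * (Sf t)⁻¹) - (Sf t)⁻¹ * F
                  - (ε/2 : ℝ) • ((Sf t)⁻¹ * a * (Sf t)⁻¹)) *ᵥ (x - mf t))) := by
  have hP : ((Sf t)⁻¹)ᵀ = (Sf t)⁻¹ := symm_inv (hpos t ht)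
  set P := (Sf t)⁻¹
  set u := x - mf t with hu
  set ρ := gaussDens (mf t) (Sf t) x with hρ
  rw [(gauss_time_hasDerivAt ht hm hSm hpos x).deriv]
  have hdiv : (∑ i, pd i (fun y => gaussDens (mf t) (Sf t) y * (F *ᵥ y + g) i) x)
      = ρ * ((-(P *ᵥ u)) ⬝ᵥ (F *ᵥ x + g) + F.trace) := by
    rw [Finset.sum_congr rfl (fun i _ => pd_div_term hP F g x i)]
    simp only [dotProduct, Matrix.trace, Matrix.diag, Pi.neg_apply, mul_add,
      Finset.mul_sum]
    rw [← Finset.sum_add_distrib]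
    exact Finset.sum_congr rfl fun i _ => by ring
  have hdiff : (∑ i, ∑ k, a i k *
      pd i (fun y => pd k (fun z => gaussDens (mf t) (Sf t) z) y) x)
      = ρ * ((P *ᵥ u) ⬝ᵥ (a *ᵥ (P *ᵥ u)) - (a * P).trace) := by
    rw [Finset.sum_congr rfl (fun i _ => Finset.sum_congr rfl (fun k _ => by
      rw [pd2_gauss hP x i k]))]
    have e1 : (P *ᵥ u) ⬝ᵥ (a *ᵥ (P *ᵥ u)) = ∑ i, ∑ k, (P *ᵥ u) i * (a i k * (P *ᵥ u) k) := by
      simp [dotProduct, Matrix.mulVec, Finset.mul_sum]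
    have e2 : (a * P).trace = ∑ i, ∑ k, a i k * P k i := by
      simp [Matrix.trace, Matrix.diag, Matrix.mul_apply]
    rw [e1, e2, mul_sub, Finset.mul_sum, Finset.mul_sum, ← Finset.sum_sub_distrib]
    refine Finset.sum_congr rfl fun i _ => ?_
    rw [Finset.mul_sum, Finset.mul_sum, ← Finset.sum_sub_distrib]
    refine Finset.sum_congr rfl fun k _ => ?_
    ring
  rw [hdiv, hdiff]
  have hx : F *ᵥ x + g = F *ᵥ (u + mf t) + g := by rw [hu, sub_add_cancel]
  rw [hx]
  rw [← inner_identity P (Sf' t) F a hP ε u (mf t) (m' t) g]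
  ring

/-- Forward: the inner polynomial vanishes when the ODEs hold. -/
lemma inner_vanish {S S' F a : Matrix (Fin d) (Fin d) ℝ} {mu m' g : Fin d → ℝ} {ε : ℝ}
    (hS : S.PosDef) (haH : aᵀ = a)
    (h1 : m' = F *ᵥ mu + g) (h2 : S' = F * S + S * Fᵀ + ε • a) (u : Fin d → ℝ) :
    (F.trace + (ε/2) * (a * S⁻¹).trace - (1/2) * (S⁻¹ * S').trace)
      + (S⁻¹ *ᵥ (m' - (F *ᵥ mu + g))) ⬝ᵥ u
      + u ⬝ᵥ (((1/2 : ℝ) • (S⁻¹ * S' * S⁻¹) - S⁻¹ * F - (ε/2 : ℝ) • (S⁻¹ * a * S⁻¹)) *ᵥ u)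
      = 0 := by
  have hdet : IsUnit S.det := hS.det_pos.ne'.isUnit
  have hSP : S * S⁻¹ = 1 := Matrix.mul_nonsing_inv _ hdet
  have hPS : S⁻¹ * S = 1 := Matrix.nonsing_inv_mul _ hdet
  set P := S⁻¹
  have hP : Pᵀ = P := symm_inv hS
  -- linear term is zero
  have hlin : (P *ᵥ (m' - (F *ᵥ mu + g))) ⬝ᵥ u = 0 := by
    rw [h1, sub_self, Matrix.mulVec_zero, zero_dotProduct]
  -- trace computation
  have htr : (P * S').trace = 2 * F.trace + ε * (a * P).trace := by
    rw [h2, Matrix.mul_add, Matrix.mul_add, Matrix.trace_add, Matrix.trace_add]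
    rw [Matrix.mul_smul, Matrix.trace_smul]
    rw [show P * (F * S) = (P * F) * S by noncomm_ring]
    rw [Matrix.trace_mul_comm (P * F) S]
    rw [show S * (P * F) = (S * P) * F by noncomm_ring, hSP, Matrix.one_mul]
    rw [show P * (S * Fᵀ) = (P * S) * Fᵀ by noncomm_ring, hPS, Matrix.one_mul]
    rw [Matrix.trace_transpose, Matrix.trace_mul_comm P a]
    simp [smul_eq_mul]
    ring
  -- quadratic part
  have hq : u ⬝ᵥ (((1/2 : ℝ) • (P * S' * P) - P * F - (ε/2 : ℝ) • (P * a * P)) *ᵥ u) = 0 := by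
    have hPS'P : P * S' * P = P * F + Fᵀ * P + ε • (P * a * P) := by
      rw [h2]
      rw [Matrix.mul_add, Matrix.mul_add, Matrix.add_mul, Matrix.add_mul]
      congr 1
      · congr 1
        · rw [show P * (F * S) * P = (P * F) * (S * P) by
            noncomm_ring, hSP, Matrix.mul_one]
        · rw [show P * (S * Fᵀ) * P = ((P * S) * Fᵀ) * P by noncomm_ring, hPS,
            Matrix.one_mul]
      · rw [Matrix.mul_smul, Matrix.smul_mul, Matrix.mul_assoc]
    rw [hPS'P]
    have expand : ((1/2 : ℝ) • (P * F + Fᵀ * P + ε • (P * a * P)) - P * F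
        - (ε/2 : ℝ) • (P * a * P)) = (1/2 : ℝ) • (Fᵀ * P) - (1/2 : ℝ) • (P * F) := by
      rw [smul_add, smul_add, smul_smul]
      module
    rw [expand, Matrix.sub_mulVec, dotProduct_sub, Matrix.smul_mulVec,
      Matrix.smul_mulVec, dotProduct_smul, dotProduct_smul]
    have : u ⬝ᵥ ((Fᵀ * P) *ᵥ u) = u ⬝ᵥ ((P * F) *ᵥ u) := by
      rw [dot_mulVec_transpose (Fᵀ * P) u, Matrix.transpose_mul, Matrix.transpose_transpose, hP]
    rw [this]
    ring
  rw [hlin, htr, hq]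
  ring

/-- Backward: a quadratic polynomial vanishing everywhere has zero coefficients. -/
lemma poly_zero {c : ℝ} {v : Fin d → ℝ} {Q : Matrix (Fin d) (Fin d) ℝ}
    (h : ∀ u : Fin d → ℝ, c + v ⬝ᵥ u + u ⬝ᵥ (Q *ᵥ u) = 0) :
    v = 0 ∧ ∀ i j, Q i j + Q j i = 0 := by
  have hc : c = 0 := by have := h 0; simpa using this
  have hv : ∀ u, v ⬝ᵥ u = 0 := by
    intro u
    have h1 := h u
    have h2 := h (-u)
    simp only [Matrix.mulVec_neg, dotProduct_neg, neg_dotProduct, neg_neg] at h2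
    linarith
  have hq : ∀ u, u ⬝ᵥ (Q *ᵥ u) = 0 := by
    intro u; have := h u; rw [hc, hv u] at this; linarith
  constructor
  · funext i
    have := hv (Pi.single i 1)
    simpa [dotProduct_single] using this
  · intro i j
    have hii : ∀ i, Q i i = 0 := by
      intro i
      have := hq (Pi.single i 1)
      simpa [single_dotProduct, Matrix.mulVec_single] using this
    have := hq (Pi.single i 1 + Pi.single j 1)
    rw [Matrix.mulVec_add, add_dotProduct, dotProduct_add,
      dotProduct_add] at this
    simp only [single_dotProduct, Matrix.mulVec_single, one_mul, mul_one, MulOpposite.op_one,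
      one_smul, Matrix.col_apply] at this
    rcases eq_or_ne i j with rfl | hij
    · simp [hii i]
    · have := this
      simp only [hii i, hii j] at this
      linarith [this]

/-- Recover the ODEs from the vanishing coefficients. -/
lemma recover {S S' F a : Matrix (Fin d) (Fin d) ℝ} {mu m' g : Fin d → ℝ} {ε : ℝ}
    (hS : S.PosDef) (hS' : S'ᵀ = S') (haH : aᵀ = a)
    (hv : S⁻¹ *ᵥ (m' - (F *ᵥ mu + g)) = 0)
    (hq : ∀ i j, ((1/2 : ℝ) • (S⁻¹ * S' * S⁻¹) - S⁻¹ * F - (ε/2 : ℝ) • (S⁻¹ * a * S⁻¹)) i j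
        + ((1/2 : ℝ) • (S⁻¹ * S' * S⁻¹) - S⁻¹ * F - (ε/2 : ℝ) • (S⁻¹ * a * S⁻¹)) j i = 0) :
    m' = F *ᵥ mu + g ∧ S' = F * S + S * Fᵀ + ε • a := by
  have hdet : IsUnit S.det := hS.det_pos.ne'.isUnit
  have hSP : S * S⁻¹ = 1 := Matrix.mul_nonsing_inv _ hdet
  have hPS : S⁻¹ * S = 1 := Matrix.nonsing_inv_mul _ hdet
  set P := S⁻¹ with hPdef
  have hP : Pᵀ = P := symm_inv hS
  have hSsym : Sᵀ = S := by
    have := hS.isHermitian.eq; rwa [Matrix.conjTranspose_eq_transpose_of_trivial] at this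
  constructor
  · have : S *ᵥ (P *ᵥ (m' - (F *ᵥ mu + g))) = 0 := by rw [hv, Matrix.mulVec_zero]
    rw [Matrix.mulVec_mulVec, hSP, Matrix.one_mulVec, sub_eq_zero] at this
    exact this
  · set Q := (1/2 : ℝ) • (P * S' * P) - P * F - (ε/2 : ℝ) • (P * a * P) with hQ
    have hQQ : Q + Qᵀ = 0 := by
      ext i j
      simpa [Matrix.add_apply, Matrix.transpose_apply] using hq i j
    have hQT : Qᵀ = (1/2 : ℝ) • (P * S' * P) - Fᵀ * P - (ε/2 : ℝ) • (P * a * P) := by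
      rw [hQ]
      simp only [Matrix.transpose_sub, Matrix.transpose_smul, Matrix.transpose_mul, hP, haH,
        hS', Matrix.mul_assoc]
    have hS'eq : P * S' * P = P * F + Fᵀ * P + ε • (P * a * P) := by
      have h0 := hQQ
      rw [hQ, hQT] at h0
      linear_combination (norm := module) h0
    -- multiply by S on both sides
    have := congrArg (fun M => S * M * S) hS'eq
    rw [show S * (P * S' * P) * S = (S * P) * S' * (P * S) by noncomm_ring, hSP, hPS,
      Matrix.one_mul, Matrix.mul_one] at this
    have expand : S * (P * F + Fᵀ * P + ε • (P * a * P)) * S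
        = (S * P) * (F * S) + (S * Fᵀ) * (P * S) + ε • ((S * P) * a * (P * S)) := by
      simp only [Matrix.mul_add, Matrix.add_mul, Matrix.mul_smul, Matrix.smul_mul]
      congr 1
      · congr 1
        · noncomm_ring
        · noncomm_ring
      · congr 1
        noncomm_ring
    rw [expand, hSP, hPS] at this
    simp only [Matrix.one_mul, Matrix.mul_one] at this
    exact this


/-- `Σ'` is symmetric on `[0,1]`. -/
lemma Sm'_symm {t : ℝ} {Sf Sf' : ℝ → Matrix (Fin d) (Fin d) ℝ}
    (ht : t ∈ Set.Icc (0:ℝ) 1)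
    (hSm : ∀ s ∈ Set.Icc (0:ℝ) 1, ∀ i j, HasDerivAt (fun r => Sf r i j) (Sf' s i j) s)
    (hpos : ∀ s ∈ Set.Icc (0:ℝ) 1, (Sf s).PosDef) :
    (Sf' t)ᵀ = Sf' t := by
  ext i j
  rw [Matrix.transpose_apply]
  refine deriv_eq_of_eqOn ht (hSm t ht j i) (hSm t ht i j) fun s hs => ?_
  have h := (hpos s hs).isHermitian.eq
  rw [Matrix.conjTranspose_eq_transpose_of_trivial] at h
  calc Sf s j i = (Sf s)ᵀ i j := rfl
    _ = Sf s i j := by rw [h]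

lemma gauss_pos {d : ℕ} {m : Fin d → ℝ} {S : Matrix (Fin d) (Fin d) ℝ}
    (hS : S.PosDef) (x : Fin d → ℝ) : 0 < gaussDens m S x := by
  unfold gaussDens
  have hd : 0 < S.det := hS.det_pos
  have h2 : (0:ℝ) < 2 * Real.pi := by positivity
  positivity

set_option maxHeartbeats 2000000 in
theorem statement_8 {d : ℕ} (ε : ℝ) (hε : 0 < ε)
    (a : Matrix (Fin d) (Fin d) ℝ) (ha : a.PosSemidef)
    (m m' : ℝ → (Fin d → ℝ)) (Sm Sm' : ℝ → Matrix (Fin d) (Fin d) ℝ)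
    (F : ℝ → Matrix (Fin d) (Fin d) ℝ) (g : ℝ → (Fin d → ℝ))
    (hm : ∀ t ∈ Set.Icc (0 : ℝ) 1, ∀ i, HasDerivAt (fun s => m s i) (m' t i) t)
    (hSm : ∀ t ∈ Set.Icc (0 : ℝ) 1, ∀ i j, HasDerivAt (fun s => Sm s i j) (Sm' t i j) t)
    (hpos : ∀ t ∈ Set.Icc (0 : ℝ) 1, (Sm t).PosDef)
    (hF : ∀ i j, ContinuousOn (fun t => F t i j) (Set.Icc (0 : ℝ) 1))
    (hg : ∀ i, ContinuousOn (fun t => g t i) (Set.Icc (0 : ℝ) 1)) :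
    (∀ t ∈ Set.Icc (0 : ℝ) 1, ∀ x : Fin d → ℝ,
      deriv (fun s => gaussDens (m s) (Sm s) x) t
        + (∑ i, pd i (fun y => gaussDens (m t) (Sm t) y * (F t *ᵥ y + g t) i) x)
        - (ε / 2) * ∑ i, ∑ k, a i k *
            pd i (fun y => pd k (fun z => gaussDens (m t) (Sm t) z) y) x = 0)
    ↔ (∀ t ∈ Set.Icc (0 : ℝ) 1,
        m' t = F t *ᵥ m t + g t ∧ Sm' t = F t * Sm t + Sm t * (F t)ᵀ + ε • a) := by
  have haT : aᵀ = a := by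
    have := ha.isHermitian.eq
    rwa [Matrix.conjTranspose_eq_transpose_of_trivial] at this
  constructor
  · intro hFP t ht
    have hS := hpos t ht
    have hS'symm : (Sm' t)ᵀ = Sm' t := Sm'_symm ht hSm hpos
    have hpoly : ∀ u : Fin d → ℝ,
        ((F t).trace + (ε/2) * (a * (Sm t)⁻¹).trace - (1/2) * ((Sm t)⁻¹ * Sm' t).trace)
          + ((Sm t)⁻¹ *ᵥ (m' t - (F t *ᵥ m t + g t))) ⬝ᵥ u
          + u ⬝ᵥ (((1/2 : ℝ) • ((Sm t)⁻¹ * Sm' t * (Sm t)⁻¹) - (Sm t)⁻¹ * F t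
              - (ε/2 : ℝ) • ((Sm t)⁻¹ * a * (Sm t)⁻¹)) *ᵥ u) = 0 := by
      intro u
      have h0 := hFP t ht (u + m t)
      rw [master ε a (F t) (g t) ht hm hSm hpos (u + m t)] at h0
      have hρ : gaussDens (m t) (Sm t) (u + m t) ≠ 0 := (gauss_pos hS _).ne'
      have h1 := (mul_eq_zero.mp h0).resolve_left hρ
      rwa [add_sub_cancel_right] at h1
    obtain ⟨hv, hq⟩ := poly_zero hpoly
    exact recover hS hS'symm haT hv hq
  · intro hODE t ht x
    rw [master ε a (F t) (g t) ht hm hSm hpos x]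
    rw [inner_vanish (hpos t ht) haT (hODE t ht).1 (hODE t ht).2 (x - m t), mul_zero]

end Stmt8
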